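/- Let 0 < λ < 2 and define the sequence (F̃ₙ) by F̃₀ ≥ 0, F̃₁ ≥ 0 (not both zero) and F̃_{n+1} = |λ F̃ₙ − F̃_{n−1}|. Then the sequence (F̃ₙ) is bounded. -/

import Mathlib

open Real

theorem stmt16 (lam : ℝ) (hlam0 : 0 < lam) (hlam2 : lam < 2)
    (F : ℕ → ℝ) (hF0 : 0 ≤ F 0) (hF1 : 0 ≤ F 1) (hne : ¬(F 0 = 0 ∧ F 1 = 0))
    (hrec : ∀ n, F (n + 2) = |lam * F (n + 1) - F n|) :
    ∃ C : ℝ, ∀ n, F n ≤ C := by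
  have hnn : ∀ n, 0 ≤ F n := by
    intro n
    match n with
    | 0 => exact hF0
    | 1 => exact hF1
    | (m + 2) => rw [hrec m]; exact abs_nonneg _
  set Q : ℕ → ℝ := fun n => F (n+1)^2 - lam * F (n+1) * F n + F n ^ 2 with hQ
  have hmono : ∀ n, Q (n+1) ≤ Q n := by
    intro n
    have h2 := hrec n
    have habs : lam * F (n+1) - F n ≤ F (n+2) := h2 ▸ le_abs_self _
    have hsq : F (n+2)^2 = (lam * F (n+1) - F n)^2 := by rw [h2, sq_abs]
    have h1 := hnn (n+1)
    simp only [hQ]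
    nlinarith [mul_nonneg hlam0.le h1, mul_le_mul_of_nonneg_left habs (mul_nonneg hlam0.le h1)]
  have hQ0 : ∀ n, Q n ≤ Q 0 := by
    intro n
    induction n with
    | zero => exact le_refl _
    | succ m ih => exact (hmono m).trans ih
  have hc : (0:ℝ) < 1 - lam / 2 := by linarith
  have hlow : ∀ n, (1 - lam/2) * F n ^ 2 ≤ Q n := by
    intro n
    simp only [hQ]
    nlinarith [sq_nonneg (F (n+1) - F n), sq_nonneg (F (n+1))]
  refine ⟨max (F 0) (Real.sqrt (Q 0 / (1 - lam/2))), fun n => ?_⟩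
  match n with
  | 0 => exact le_max_left _ _
  | (m + 1) =>
    have h1 : F (m+1) ^ 2 ≤ Q 0 / (1 - lam/2) := by
      rw [le_div_iff₀ hc]
      have := (hlow (m+1)).trans (hQ0 (m+1))
      linarith
    have : F (m+1) ≤ Real.sqrt (Q 0 / (1 - lam/2)) := by
      have := Real.sqrt_le_sqrt h1
      rwa [Real.sqrt_sq (hnn (m+1))] at this
    exact this.trans (le_max_right _ _)
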